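/- There exists a constant C > 0, depending only on h and μ, such that for every l ∈ B, every v ∈ L², and every continuous function Φ : [0,1] → L² satisfying the Marcus integral equation Φ(t) = v + l ∫₀ᵗ ḡ(Φ(s)) ds for all t ∈ [0,1], the map H(l,v) := Φ(1) − v − l ḡ(v) satisfies ‖H(l,v)‖_{L²} ≤ C (1 + ‖v‖_{L²}). -/

import Mathlib

set_option maxHeartbeats 1000000

open MeasureTheory
open scoped RealInnerProductSpace ENNReal

/-- The cross product on `ℝ³ = EuclideanSpace ℝ (Fin 3)`. -/
noncomputable def cross3 (a b : EuclideanSpace ℝ (Fin 3)) : EuclideanSpace ℝ (Fin 3) :=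
  WithLp.toLp 2 ![a 1 * b 2 - a 2 * b 1, a 2 * b 0 - a 0 * b 2, a 0 * b 1 - a 1 * b 0]

lemma norm_cross3_le (a b : EuclideanSpace ℝ (Fin 3)) : ‖cross3 a b‖ ≤ ‖a‖ * ‖b‖ := by
  have hsq : ∀ x : EuclideanSpace ℝ (Fin 3), ‖x‖ ^ 2 = x 0 ^ 2 + x 1 ^ 2 + x 2 ^ 2 := by
    intro x
    rw [EuclideanSpace.norm_eq, Real.sq_sqrt (by positivity)]
    simp [Fin.sum_univ_three, sq_abs]
  have h2 : ‖cross3 a b‖ ^ 2 ≤ (‖a‖ * ‖b‖) ^ 2 := by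
    rw [hsq, mul_pow, hsq, hsq]
    simp only [cross3, PiLp.toLp_apply, Matrix.cons_val_zero, Matrix.cons_val_one, Matrix.head_cons,
      Matrix.cons_val_two, Matrix.tail_cons]
    nlinarith [sq_nonneg (a 0 * b 0 + a 1 * b 1 + a 2 * b 2)]
  calc ‖cross3 a b‖ = Real.sqrt (‖cross3 a b‖ ^ 2) := (Real.sqrt_sq (norm_nonneg _)).symm
  _ ≤ Real.sqrt ((‖a‖ * ‖b‖) ^ 2) := Real.sqrt_le_sqrt h2
  _ = ‖a‖ * ‖b‖ := Real.sqrt_sq (by positivity)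

lemma cross3_sub (a b c : EuclideanSpace ℝ (Fin 3)) :
    cross3 a c - cross3 b c = cross3 (a - b) c := by
  have hs : ∀ (x y : EuclideanSpace ℝ (Fin 3)) (j : Fin 3), (x - y) j = x j - y j :=
    fun _ _ _ => rfl
  ext i
  fin_cases i <;> simp [cross3, hs] <;> ring

/-- linear growth of the Marcus correction `H(l,v) = Φ(1) − v − l ḡ(v)`,
uniformly in `l ∈ B`. -/
theorem marcus_H_linear_growth
    {𝒪 : Type*} [MeasurableSpace 𝒪] (μ : Measure 𝒪) [IsFiniteMeasure μ]
    (h : 𝒪 → EuclideanSpace ℝ (Fin 3)) (hmeas : Measurable h) (hbdd : MemLp h ⊤ μ)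
    (gbar : Lp (EuclideanSpace ℝ (Fin 3)) 2 μ → Lp (EuclideanSpace ℝ (Fin 3)) 2 μ)
    (hgbar : ∀ v, ∀ᵐ x ∂μ, gbar v x = cross3 (v x) (h x) + h x) :
    ∃ C : ℝ, 0 < C ∧
      ∀ (l : ℝ), 0 < |l| → |l| < 1 →
      ∀ (v : Lp (EuclideanSpace ℝ (Fin 3)) 2 μ)
        (Φ : ℝ → Lp (EuclideanSpace ℝ (Fin 3)) 2 μ),
        ContinuousOn Φ (Set.Icc 0 1) →
        (∀ t ∈ Set.Icc (0:ℝ) 1, Φ t = v + l • ∫ s in (0:ℝ)..t, gbar (Φ s)) →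
        ‖Φ 1 - v - l • gbar v‖ ≤ C * (1 + ‖v‖) := by
  classical
  set M : ℝ := (eLpNorm h ⊤ μ).toReal with hMdef
  have hM0 : 0 ≤ M := ENNReal.toReal_nonneg
  have hhae : ∀ᵐ x ∂μ, ‖h x‖ ≤ M := by
    filter_upwards [ae_le_eLpNormEssSup (f := h) (μ := μ)] with x hx
    calc ‖h x‖ = ((‖h x‖₊ : ℝ≥0∞)).toReal := by simp
    _ ≤ M := by
        rw [hMdef, eLpNorm_exponent_top]
        exact ENNReal.toReal_mono (by rw [← eLpNorm_exponent_top]; exact hbdd.eLpNorm_ne_top) hx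
  have hh2 : MemLp h 2 μ := hbdd.mono_exponent le_top
  set H2 : Lp (EuclideanSpace ℝ (Fin 3)) 2 μ := hh2.toLp h with hH2def
  set Ch : ℝ := ‖H2‖ with hChdef
  have hCh0 : 0 ≤ Ch := norm_nonneg _
  -- basic bound on gbar
  have key : ∀ w : Lp (EuclideanSpace ℝ (Fin 3)) 2 μ, ‖gbar w - H2‖ ≤ M * ‖w‖ := by
    intro w
    apply Lp.norm_le_mul_norm_of_ae_le_mul
    filter_upwards [hgbar w, Lp.coeFn_sub (gbar w) H2, hh2.coeFn_toLp, hhae] with x h1 h2 h3 h4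
    rw [h2, Pi.sub_apply, h1, h3, add_sub_cancel_right]
    calc ‖cross3 (w x) (h x)‖ ≤ ‖w x‖ * ‖h x‖ := norm_cross3_le _ _
    _ ≤ M * ‖w x‖ := by nlinarith [norm_nonneg ((w : 𝒪 → EuclideanSpace ℝ (Fin 3)) x)]
  have gb_bound : ∀ w, ‖gbar w‖ ≤ M * ‖w‖ + Ch := by
    intro w
    calc ‖gbar w‖ = ‖(gbar w - H2) + H2‖ := by rw [sub_add_cancel]
    _ ≤ ‖gbar w - H2‖ + ‖H2‖ := norm_add_le _ _
    _ ≤ M * ‖w‖ + Ch := add_le_add (key w) le_rfl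
  -- gbar is Lipschitz, hence continuous
  have lip : LipschitzWith (Real.toNNReal M) gbar := by
    refine LipschitzWith.of_dist_le_mul fun v w => ?_
    rw [dist_eq_norm, dist_eq_norm, Real.coe_toNNReal _ hM0]
    apply Lp.norm_le_mul_norm_of_ae_le_mul
    filter_upwards [hgbar v, hgbar w, Lp.coeFn_sub (gbar v) (gbar w), Lp.coeFn_sub v w, hhae]
      with x h1 h2 h3 h4 h5
    rw [h3, Pi.sub_apply, h1, h2, h4, Pi.sub_apply]
    have he : cross3 (v x) (h x) + h x - (cross3 (w x) (h x) + h x)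
        = cross3 ((v : 𝒪 → EuclideanSpace ℝ (Fin 3)) x - w x) (h x) := by
      rw [← cross3_sub]; abel
    rw [he]
    calc ‖cross3 ((v : 𝒪 → EuclideanSpace ℝ (Fin 3)) x - w x) (h x)‖
        ≤ ‖(v : 𝒪 → EuclideanSpace ℝ (Fin 3)) x - w x‖ * ‖h x‖ := norm_cross3_le _ _
    _ ≤ M * ‖(v : 𝒪 → EuclideanSpace ℝ (Fin 3)) x - w x‖ := by
        nlinarith [norm_nonneg ((v : 𝒪 → EuclideanSpace ℝ (Fin 3)) x - w x)]
  set K : ℝ := M + 1 with hKdef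
  have hK1 : (1:ℝ) ≤ K := by simp [hKdef]; linarith
  have hKpos : (0:ℝ) < K := by linarith
  set ε : ℝ := Ch + 1 with hεdef
  have hε1 : (1:ℝ) ≤ ε := by simp [hεdef]; linarith
  refine ⟨M * Real.exp K * (Ch + 2) + M + 2 * Ch + 1, by positivity, ?_⟩
  intro l hl0 hl1 v Φ hΦc hΦeq
  set G : ℝ → Lp (EuclideanSpace ℝ (Fin 3)) 2 μ := fun s => gbar (Φ s) with hGdef
  have hGc : ContinuousOn G (Set.Icc 0 1) := lip.continuous.comp_continuousOn hΦc
  have hΦ0 : Φ 0 = v := by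
    have := hΦeq 0 (by norm_num)
    simpa using this
  -- derivative of Φ from the right
  have hderiv : ∀ t ∈ Set.Ico (0:ℝ) 1, HasDerivWithinAt Φ (l • G t) (Set.Ici t) t := by
    intro t ht
    have hsub : Set.Icc t 1 ⊆ Set.Icc 0 1 := Set.Icc_subset_Icc ht.1 le_rfl
    have hGiT : IntervalIntegrable G MeasureTheory.volume 0 t := by
      apply ContinuousOn.intervalIntegrable
      rw [Set.uIcc_of_le ht.1]
      exact hGc.mono (Set.Icc_subset_Icc le_rfl ht.2.le)
    have hmeasG : StronglyMeasurableAtFilter G (nhdsWithin t (Set.Ioi t)) :=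
      ⟨Set.Icc t 1, Icc_mem_nhdsGT_of_mem ⟨le_rfl, ht.2⟩,
        ((hGc.mono hsub).aestronglyMeasurable measurableSet_Icc)⟩
    have hcontG : ContinuousWithinAt G (Set.Ioi t) t :=
      (hGc t ⟨ht.1, ht.2.le⟩).mono_of_mem_nhdsWithin (Icc_mem_nhdsGT_of_mem ⟨ht.1, ht.2⟩)
    have hF : HasDerivWithinAt (fun u => ∫ s in (0:ℝ)..u, G s) (G t) (Set.Ici t) t :=
      intervalIntegral.integral_hasDerivWithinAt_right hGiT hmeasG hcontG
    have hF' : HasDerivWithinAt (fun u => v + l • ∫ s in (0:ℝ)..u, G s) (l • G t)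
        (Set.Ici t) t := (hF.const_smul l).const_add v
    refine hF'.congr_of_eventuallyEq ?_ (hΦeq t ⟨ht.1, ht.2.le⟩)
    filter_upwards [Icc_mem_nhdsGE_of_mem (⟨ht.1, ht.2⟩ : t ∈ Set.Ico 0 1)] with u hu
    exact hΦeq u hu
  -- Gronwall
  have hbound : ∀ x ∈ Set.Ico (0:ℝ) 1, ‖l • G x‖ ≤ K * ‖Φ x‖ + ε := by
    intro x hx
    have hb := gb_bound (Φ x)
    calc ‖l • G x‖ = |l| * ‖G x‖ := by rw [norm_smul, Real.norm_eq_abs]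
    _ ≤ ‖G x‖ := by nlinarith [norm_nonneg (G x), abs_nonneg l]
    _ ≤ M * ‖Φ x‖ + Ch := hb
    _ ≤ K * ‖Φ x‖ + ε := by nlinarith [norm_nonneg (Φ x)]
  have grw := norm_le_gronwallBound_of_norm_deriv_right_le (f := Φ)
      (f' := fun t => l • G t) (δ := ‖v‖) (K := K) (ε := ε) (a := 0) (b := 1)
      hΦc hderiv (by rw [hΦ0]) hbound
  set Bv : ℝ := (‖v‖ + ε) * Real.exp K with hBvdef
  have hB : ∀ x ∈ Set.Icc (0:ℝ) 1, ‖Φ x‖ ≤ Bv := by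
    intro x hx
    have hg := grw x hx
    rw [gronwallBound_of_K_ne_0 (ne_of_gt hKpos)] at hg
    have hexp : Real.exp (K * (x - 0)) ≤ Real.exp K :=
      Real.exp_le_exp.mpr (by nlinarith [hx.1, hx.2])
    have hd : ε / K ≤ ε := div_le_self (by linarith) hK1
    have hd0 : 0 ≤ ε / K := by positivity
    have hexp0 : (0:ℝ) < Real.exp (K * (x - 0)) := Real.exp_pos _
    nlinarith [norm_nonneg v, Real.exp_pos K]
  have hΦ1 : Φ 1 = v + l • ∫ s in (0:ℝ)..1, G s := hΦeq 1 (by norm_num)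
  have hIb : ‖∫ s in (0:ℝ)..1, G s‖ ≤ (M * Bv + Ch) * |((1:ℝ) - 0)| := by
    apply intervalIntegral.norm_integral_le_of_norm_le_const
    intro s hs
    rw [Set.uIoc_of_le (by norm_num : (0:ℝ) ≤ 1)] at hs
    have hs' : s ∈ Set.Icc (0:ℝ) 1 := ⟨hs.1.le, hs.2⟩
    calc ‖G s‖ ≤ M * ‖Φ s‖ + Ch := gb_bound _
    _ ≤ M * Bv + Ch := by nlinarith [hB s hs']
  rw [abs_of_nonneg (by norm_num : (0:ℝ) ≤ 1 - 0)] at hIb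
  have hBv0 : 0 ≤ Bv := by positivity
  have h1 : ‖Φ 1 - v‖ ≤ M * Bv + Ch := by
    rw [hΦ1, add_sub_cancel_left, norm_smul, Real.norm_eq_abs]
    nlinarith [norm_nonneg (∫ s in (0:ℝ)..1, G s), abs_nonneg l]
  have h2 : ‖l • gbar v‖ ≤ M * ‖v‖ + Ch := by
    rw [norm_smul, Real.norm_eq_abs]
    nlinarith [gb_bound v, norm_nonneg (gbar v), abs_nonneg l, norm_nonneg v]
  calc ‖Φ 1 - v - l • gbar v‖ ≤ ‖Φ 1 - v‖ + ‖l • gbar v‖ := norm_sub_le _ _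
  _ ≤ (M * Bv + Ch) + (M * ‖v‖ + Ch) := add_le_add h1 h2
  _ ≤ (M * Real.exp K * (Ch + 2) + M + 2 * Ch + 1) * (1 + ‖v‖) := by
      have he1 : (1:ℝ) ≤ Real.exp K := Real.one_le_exp hKpos.le
      rw [hBvdef, hεdef]
      nlinarith [norm_nonneg v, Real.exp_pos K, mul_nonneg hM0 (norm_nonneg v),
        mul_nonneg (mul_nonneg hM0 (Real.exp_pos K).le) (norm_nonneg v)]
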